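/- Let M be a densely linearly ordered set without endpoints, equipped with the order topology, such that every subset of M definable in a given first-order structure on M is, near each point, a finite union of points and open intervals (local o-minimality), and suppose every definable subset of M has a supremum and infimum in M ∪ {±∞} (definable completeness). Then every definable subset of M with empty interior is closed and discrete. -/

import Mathlib

open FirstOrder Set

namespace Paper

variable (L : FirstOrder.Language)

/-- A subset of `Mⁿ` definable with arbitrary parameters from `M`. -/
def Def (M : Type*) [L.Structure M] {n : ℕ} (s : Set (Fin n → M)) : Prop :=
  Set.Definable (Set.univ : Set M) L s

/-- A subset of `M` definable with arbitrary parameters from `M`. -/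
def Def1 (M : Type*) [L.Structure M] (s : Set M) : Prop :=
  Def L M {f : Fin 1 → M | f 0 ∈ s}

/-- A subset of `M × M` definable with arbitrary parameters from `M`. -/
def Def2 (M : Type*) [L.Structure M] (s : Set (M × M)) : Prop :=
  Def L M {f : Fin 2 → M | (f 0, f 1) ∈ s}

/-- A discrete subset of a topological space. -/
def IsDiscrete {X : Type*} [TopologicalSpace X] (s : Set X) : Prop :=
  ∀ x ∈ s, ∃ U : Set X, IsOpen U ∧ x ∈ U ∧ U ∩ s = {x}

/-- An open interval (with possibly infinite endpoints). -/
def IsOInterval {M : Type*} [Preorder M] (s : Set M) : Prop :=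
  (∃ a b : M, s = Set.Ioo a b) ∨ (∃ a, s = Set.Ioi a) ∨ (∃ b, s = Set.Iio b) ∨ s = Set.univ

/-- A finite union of points and open intervals. -/
def FinUnionPtsIntervals {M : Type*} [Preorder M] (s : Set M) : Prop :=
  ∃ (F : Finset M) (n : ℕ) (J : Fin n → Set M),
    (∀ i, IsOInterval (J i)) ∧ s = ↑F ∪ ⋃ i, J i

/-- Local o-minimality. -/
def LocallyOMinimal (M : Type*) [L.Structure M] [LinearOrder M] : Prop :=
  ∀ s : Set M, Def1 L M s → ∀ a : M,
    ∃ I : Set M, IsOInterval I ∧ a ∈ I ∧ FinUnionPtsIntervals (s ∩ I)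

/-- Definable completeness. -/
def DefinablyComplete (M : Type*) [L.Structure M] [LinearOrder M] : Prop :=
  ∀ s : Set M, Def1 L M s → s.Nonempty →
    (BddAbove s → ∃ a, IsLUB s a) ∧ (BddBelow s → ∃ a, IsGLB s a)

/-- A coordinate projection of `X ⊆ Mⁿ` to `M^d` has image with nonempty interior. -/
def HasDimWit {M : Type*} [TopologicalSpace M] {n : ℕ} (X : Set (Fin n → M)) (d : ℕ) : Prop :=
  ∃ σ : Fin d ↪ Fin n, (interior ((fun x => x ∘ σ) '' X)).Nonempty

/-- The projection dimension of a subset of `Mⁿ`, with `projDim ∅ = ⊥ = -∞`. -/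
noncomputable def projDim {M : Type*} [TopologicalSpace M] {n : ℕ}
    (X : Set (Fin n → M)) : WithBot ℕ∞ :=
  ⨆ d ∈ {d : ℕ | HasDimWit X d}, ((d : ℕ∞) : WithBot ℕ∞)

/-- The discrete closure of `A ⊆ M`. -/
def discl (M : Type*) [L.Structure M] [TopologicalSpace M] (A : Set M) : Set M :=
  {x | ∃ s : Set M, Set.Definable A L {f : Fin 1 → M | f 0 ∈ s} ∧
    IsDiscrete s ∧ IsClosed s ∧ x ∈ s}


end Paper

open Paper

/-- In a definably complete locally o-minimal structure, any definable subset of `M`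
having an empty interior is closed and discrete. -/
lemma isOInterval_isOpen {M : Type*} [LinearOrder M] [TopologicalSpace M] [OrderTopology M]
    {s : Set M} (h : Paper.IsOInterval s) : IsOpen s := by
  rcases h with ⟨a, b, rfl⟩ | ⟨a, rfl⟩ | ⟨b, rfl⟩ | rfl
  · exact isOpen_Ioo
  · exact isOpen_Ioi
  · exact isOpen_Iio
  · exact isOpen_univ

lemma key_local {L : FirstOrder.Language} {M : Type*} [LinearOrder M] [L.Structure M]
    [TopologicalSpace M] [OrderTopology M]
    (hlo : LocallyOMinimal L M)
    (X : Set M) (hX : Def1 L M X) (hint : interior X = ∅) (a : M) :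
    ∃ (I : Set M) (F : Finset M), IsOpen I ∧ a ∈ I ∧ X ∩ I = ↑F := by
  obtain ⟨I, hI, haI, F, n, J, hJ, hEq⟩ := hlo X hX a
  refine ⟨I, F, isOInterval_isOpen hI, haI, ?_⟩
  have hJempty : ∀ i, J i = (∅ : Set M) := by
    intro i
    have hsub : J i ⊆ interior X := by
      apply interior_maximal _ (isOInterval_isOpen (hJ i))
      intro x hx
      have : x ∈ X ∩ I := by
        rw [hEq]; exact Or.inr (Set.mem_iUnion.mpr ⟨i, hx⟩)
      exact this.1
    rw [hint] at hsub
    exact Set.eq_empty_iff_forall_notMem.mpr fun x hx => hsub hx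
  rw [hEq]
  have : (⋃ i, J i) = (∅ : Set M) := by
    simp [hJempty]
  rw [this, Set.union_empty]

theorem definable_empty_interior_closed_discrete
    {L : FirstOrder.Language} {M : Type*} [L.IsOrdered] [LinearOrder M] [L.Structure M]
    [L.OrderedStructure M] [DenselyOrdered M] [NoMaxOrder M] [NoMinOrder M]
    [TopologicalSpace M] [OrderTopology M]
    (hlo : LocallyOMinimal L M) (hdc : DefinablyComplete L M)
    (X : Set M) (hX : Def1 L M X) (hint : interior X = ∅) :
    IsClosed X ∧ Paper.IsDiscrete X := by
  constructor
  · rw [← isOpen_compl_iff, isOpen_iff_forall_mem_open]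
    intro a ha
    obtain ⟨I, F, hIopen, haI, hXI⟩ := key_local hlo X hX hint a
    refine ⟨I ∩ (↑F : Set M)ᶜ, ?_, ?_, ?_, ?_⟩
    · intro x ⟨hxI, hxF⟩ hxX
      exact hxF (hXI ▸ ⟨hxX, hxI⟩)
    · exact hIopen.inter (F.finite_toSet.isClosed.isOpen_compl)
    · exact haI
    · intro haF
      exact ha ((hXI ▸ haF : a ∈ X ∩ I)).1
  · intro a haX
    obtain ⟨I, F, hIopen, haI, hXI⟩ := key_local hlo X hX hint a
    refine ⟨I ∩ (↑(F.erase a) : Set M)ᶜ, hIopen.inter ((F.erase a).finite_toSet.isClosed.isOpen_compl), ⟨haI, by simp⟩, ?_⟩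
    ext x
    constructor
    · rintro ⟨⟨hxI, hxE⟩, hxX⟩
      have hxF : x ∈ (↑F : Set M) := hXI ▸ ⟨hxX, hxI⟩
      by_contra hne
      exact hxE (Finset.mem_erase.mpr ⟨hne, hxF⟩)
    · rintro rfl
      exact ⟨⟨haI, by simp⟩, haX⟩
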